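/- (Factorization of ζ₂) The identity H·m^2·s·(m·α − m·s^2·α + s·β + s^(2n)·β) − (s^2−1)·(m^2·η₁ + m^2·s^3·η₁ + s·η₂ + m^2·s·η₂) = m·( (m^2·(s^2−s+1) − s)·(s^(2n+3)+1) − H·s·(s−1) )·r₀ holds for all complex numbers m and s. -/
import Mathlib


open Matrix

theorem pretzel_stmt16 (n : ℕ) (hn : 1 ≤ n) (m s : ℂ)
    (α β : ℂ)
    (hα : α = (s ^ 2 - 1) * s ^ (2 * n) *
      (-(m ^ 6) * (s - 1) * s ^ 2 * (s ^ (2 * n + 1) + 1)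
        + m ^ 4 * (s ^ (2 * n + 2) * (s ^ 4 - 2 * s ^ 2 + 3 * s - 1)
            + s ^ 4 - 3 * s ^ 3 + 2 * s ^ 2 - 1)
        - m ^ 2 * s * (s ^ (2 * n) * (2 * s ^ 3 - s ^ 2 + 1) - s * (s ^ 3 - s + 2))
        + s ^ 2 * (s ^ (2 * n) - s ^ 2)))
    (hβ : β = m ^ 7 * s ^ (2 * n + 2) * (s ^ 2 - 1) * (s ^ 3 + 1)
        - m ^ 5 * s ^ 3 * (s ^ (4 * n) * (s ^ 3 - s ^ 2 + 1)
            + s ^ (2 * n - 2) * (s - 1) * (s ^ 3 + s + 1) * (s ^ 3 + s ^ 2 + 1)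
            - (s ^ 3 - s + 1))
        + m ^ 3 * s ^ 2 * (s ^ 3 + 1) * (s ^ (2 * n) - 1) * (s ^ (2 * n) + s ^ 2)
        - m * s ^ 3 * (s ^ (2 * n) - s ^ 2) * (s ^ (2 * n) + s))
    (r₀ : ℂ)
    (hr₀ : r₀ = m ^ 8 * (s - 1) * (s + 1) ^ 2 * (s ^ (2 * n) - s ^ 2) * s ^ (2 * n + 2)
      - m ^ 6 * (s ^ (6 * n + 3)
          + (2 * s ^ 6 + s ^ 5 - 4 * s ^ 4 + s ^ 3 + s ^ 2 - s - 1) * s ^ (4 * n + 1)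
          - (s ^ 6 + s ^ 5 - s ^ 4 - s ^ 3 + 4 * s ^ 2 - s - 2) * s ^ (2 * n + 2)
          + s ^ 6)
      + m ^ 4 * ((s ^ 2 + 1) * s ^ (6 * n + 2)
          + (s ^ 6 + 2 * s ^ 5 - 3 * s ^ 4 - 2 * s ^ 3 + 6 * s ^ 2 - 4 * s - 2) * s ^ (4 * n + 3)
          - (2 * s ^ 6 + 4 * s ^ 5 - 6 * s ^ 4 + 2 * s ^ 3 + 3 * s ^ 2 - 2 * s - 1) * s ^ (2 * n)
          + (s ^ 2 + 1) * s ^ 5)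
      - m ^ 2 * (s ^ (6 * n + 3)
          + (2 * s ^ 6 + s ^ 5 - 4 * s ^ 4 + s ^ 3 + s ^ 2 - s - 1) * s ^ (4 * n + 1)
          - (s ^ 6 + s ^ 5 - s ^ 4 - s ^ 3 + 4 * s ^ 2 - s - 2) * s ^ (2 * n + 2)
          + s ^ 6)
      + (s - 1) * (s + 1) ^ 2 * (s ^ (2 * n) - s ^ 2) * s ^ (2 * n + 2))
    (H η₁ η₂ : ℂ)
    (hH : H = 1 - m ^ 2 * s + m ^ 2 * s ^ (2 * n + 1) - s ^ (2 * n + 2))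
    (hη₁ : η₁ = m * α - m * s ^ (2 * n + 1) * α + s ^ (2 * n) * β + m ^ 2 * s ^ (2 * n) * β)
    (hη₂ : η₂ = -(m * s * α) + m * s ^ (2 * n + 1) * α - s ^ (2 * n) * β - s ^ (2 * n + 1) * β) :
    H * m ^ 2 * s * (m * α - m * s ^ 2 * α + s * β + s ^ (2 * n) * β)
      - (s ^ 2 - 1) * (m ^ 2 * η₁ + m ^ 2 * s ^ 3 * η₁ + s * η₂ + m ^ 2 * s * η₂)
      = m * ((m ^ 2 * (s ^ 2 - s + 1) - s) * (s ^ (2 * n + 3) + 1) - H * s * (s - 1)) * r₀ := by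
  obtain ⟨k, rfl⟩ : ∃ k, n = k + 1 := ⟨n - 1, by omega⟩
  subst hα hβ hr₀ hH hη₁ hη₂
  simp only [show 2*(k+1)-2 = 2*k from by omega]
  ring
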